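/- Let (α,β) be a zero-one reaction network with s species whose stoichiometric matrix N has rank r ∈ {1,2}, and let W be a conservation-law matrix with pivot column indices i_1 < … < i_{s−r}. Then for every κ ∈ ℝ^m_{>0} and every positive steady state x ∈ ℝ^s_{>0} at which det Jac_h(κ,x) ≠ 0, the sign of det Jac_h(κ,x) equals (−1)^r. -/

import Mathlib

set_option maxHeartbeats 1000000


noncomputable section

/-- The stoichiometric matrix `N = β − α` of a reaction network, as a real matrix. -/
def stoich {s m : ℕ} (α β : Matrix (Fin s) (Fin m) ℕ) : Matrix (Fin s) (Fin m) ℝ :=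
  fun i j => (β i j : ℝ) - (α i j : ℝ)

/-- The mass-action species-formation rate function:
`f_i(κ,x) = Σ_j N_{ij} κ_j Π_l x_l^{α_{lj}}`. -/
def rateFun {s m : ℕ} (α β : Matrix (Fin s) (Fin m) ℕ)
    (κ : Fin m → ℝ) (x : Fin s → ℝ) (i : Fin s) : ℝ :=
  ∑ j, stoich α β i j * κ j * ∏ l, x l ^ (α l j)

/-- The Jacobian matrix of `f` with respect to `x`. -/
def jacF {s m : ℕ} (α β : Matrix (Fin s) (Fin m) ℕ)
    (κ : Fin m → ℝ) (x : Fin s → ℝ) : Matrix (Fin s) (Fin s) ℝ :=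
  fun i l => deriv (fun t => rateFun α β κ (Function.update x l t) i) (x l)

/-- The Jacobian of the steady-state system augmented by conservation laws: the row with index
`piv k` is the `k`-th row of the conservation-law matrix `W`, and the remaining rows are the
corresponding rows of `Jac_f`. -/
def jacH {s m d : ℕ} (α β : Matrix (Fin s) (Fin m) ℕ)
    (W : Matrix (Fin d) (Fin s) ℝ) (piv : Fin d → Fin s)
    (κ : Fin m → ℝ) (x : Fin s → ℝ) : Matrix (Fin s) (Fin s) ℝ :=
  fun i l => if h : ∃ k, piv k = i then W (Classical.choose h) l else jacF α β κ x i l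

lemma jacF_eq {s m : ℕ} (α β : Matrix (Fin s) (Fin m) ℕ) (hα : ∀ i j, α i j ≤ 1)
    (κ : Fin m → ℝ) (x : Fin s → ℝ) (hx : ∀ i, 0 < x i) (i l : Fin s) :
    jacF α β κ x i l
      = (x l)⁻¹ * ∑ j, (κ j * ∏ l', x l' ^ α l' j) * (α l j : ℝ) * stoich α β i j := by
  have hfun : (fun t => rateFun α β κ (Function.update x l t) i)
      = fun t => ∑ j, (stoich α β i j * κ j * ∏ l' ∈ Finset.univ.erase l, x l' ^ α l' j)
          * t ^ (α l j) := by
    funext t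
    unfold rateFun
    refine Finset.sum_congr rfl fun j _ => ?_
    rw [← Finset.mul_prod_erase Finset.univ _ (Finset.mem_univ l)]
    have hpr : ∀ l' ∈ Finset.univ.erase l,
        Function.update x l t l' ^ α l' j = x l' ^ α l' j := by
      intro l' hl'
      rw [Function.update_of_ne (Finset.ne_of_mem_erase hl')]
    rw [Finset.prod_congr rfl hpr, Function.update_self]
    ring
  have hderiv : HasDerivAt (fun t => rateFun α β κ (Function.update x l t) i)
      (∑ j, (stoich α β i j * κ j * ∏ l' ∈ Finset.univ.erase l, x l' ^ α l' j)
        * ((α l j : ℝ) * x l ^ (α l j - 1))) (x l) := by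
    rw [hfun]
    exact HasDerivAt.fun_sum fun j _ => (hasDerivAt_pow (α l j) (x l)).const_mul _
  rw [jacF, hderiv.deriv, Finset.mul_sum]
  refine Finset.sum_congr rfl fun j _ => ?_
  rcases Nat.le_one_iff_eq_zero_or_eq_one.mp (hα l j) with h | h <;> rw [h]
  · simp
  · have hxl := (hx l).ne'
    rw [← Finset.mul_prod_erase Finset.univ (fun l' => x l' ^ α l' j) (Finset.mem_univ l), h]
    push_cast
    field_simp

lemma struct {s m d r : ℕ} (α β : Matrix (Fin s) (Fin m) ℕ)
    (W : Matrix (Fin d) (Fin s) ℝ)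
    (piv : Fin d → Fin s) (hpiv : Function.Injective piv)
    (hlead : ∀ k, W k (piv k) = 1)
    (hred : ∀ k k', k' ≠ k → W k' (piv k) = 0)
    (hrd : d + r = s)
    (κ : Fin m → ℝ) (x : Fin s → ℝ) :
    ∃ (np : Fin r → Fin s) (K : Matrix (Fin s) (Fin r) ℝ),
      (∀ k t, ∑ i, W k i * K i t = 0) ∧
      (∀ t t', K (np t) t' = if t' = t then 1 else 0) ∧
      (jacH α β W piv κ x).det
        = Matrix.det (fun t t' : Fin r => ∑ l, jacF α β κ x (np t) l * K l t') := by
  classical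
  set P : Finset (Fin s) := Finset.univ.image piv with hP
  have hPcard : P.card = d := by
    rw [hP, Finset.card_image_of_injective _ hpiv, Finset.card_univ, Fintype.card_fin]
  have hCcard : Pᶜ.card = r := by
    rw [Finset.card_compl, hPcard, Fintype.card_fin]; omega
  set np : Fin r → Fin s := fun t => Pᶜ.orderEmbOfFin hCcard t with hnp
  have hnp_mem : ∀ t, np t ∈ Pᶜ := fun t => Finset.orderEmbOfFin_mem _ hCcard t
  have hnp_npiv : ∀ t, ¬∃ k, piv k = np t := by
    intro t ⟨k, hk⟩
    have := hnp_mem t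
    rw [Finset.mem_compl] at this
    exact this (by rw [hP, Finset.mem_image]; exact ⟨k, Finset.mem_univ k, hk⟩)
  have hnp_inj : Function.Injective np :=
    fun a b h => (Pᶜ.orderEmbOfFin hCcard).injective h
  -- the equivalence
  have hbij : Function.Bijective (Sum.elim np piv) := by
    constructor
    · intro a b hab
      cases a with
      | inl t => cases b with
        | inl t' => exact congrArg Sum.inl (hnp_inj hab)
        | inr k => exact absurd ⟨k, hab.symm⟩ (hnp_npiv t)
      | inr k => cases b with
        | inl t => exact absurd ⟨k, hab⟩ (hnp_npiv t)
        | inr k' => exact congrArg Sum.inr (hpiv hab)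
    · intro i
      by_cases hi : i ∈ P
      · rw [hP, Finset.mem_image] at hi
        obtain ⟨k, _, hk⟩ := hi
        exact ⟨Sum.inr k, hk⟩
      · have : i ∈ (Pᶜ : Finset (Fin s)) := Finset.mem_compl.mpr hi
        have : i ∈ Set.range (Pᶜ.orderEmbOfFin hCcard) := by
          rw [Finset.range_orderEmbOfFin]; exact this
        obtain ⟨t, ht⟩ := this
        exact ⟨Sum.inl t, ht⟩
  set e : (Fin r ⊕ Fin d) ≃ Fin s := Equiv.ofBijective _ hbij with he
  have he_inl : ∀ t, e (Sum.inl t) = np t := fun t => rfl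
  have he_inr : ∀ k, e (Sum.inr k) = piv k := fun k => rfl
  have hsumsplit : ∀ f : Fin s → ℝ,
      ∑ i, f i = (∑ t, f (np t)) + ∑ k, f (piv k) := by
    intro f
    rw [← Equiv.sum_comp e f, Fintype.sum_sum_type]
    rfl
  -- the kernel matrix
  set K : Matrix (Fin s) (Fin r) ℝ := fun i t =>
    if h : ∃ k, piv k = i then -W (Classical.choose h) (np t)
    else if np t = i then 1 else 0 with hK
  have hKpiv : ∀ k t, K (piv k) t = -W k (np t) := by
    intro k t
    have hex : ∃ k', piv k' = piv k := ⟨k, rfl⟩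
    rw [hK]
    simp only [dif_pos hex]
    rw [hpiv (Classical.choose_spec hex)]
  have hKnp : ∀ t t', K (np t) t' = if t' = t then 1 else 0 := by
    intro t t'
    rw [hK]
    simp only [dif_neg (hnp_npiv t)]
    by_cases h : t' = t
    · rw [if_pos h, if_pos (by rw [h])]
    · rw [if_neg h, if_neg (fun hh => h (hnp_inj hh))]
  have hWpivdelta : ∀ k k', W k (piv k') = if k = k' then 1 else 0 := by
    intro k k'
    by_cases h : k = k'
    · rw [if_pos h, h, hlead]
    · rw [if_neg h, hred k' k h]
  have hWK : ∀ k t, ∑ i, W k i * K i t = 0 := by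
    intro k t
    rw [hsumsplit]
    have h1 : ∑ t', W k (np t') * K (np t') t = W k (np t) := by
      simp only [hKnp]
      rw [Finset.sum_eq_single t]
      · simp
      · intro b _ hb; rw [if_neg (fun h => hb h.symm), mul_zero]
      · intro h; exact absurd (Finset.mem_univ t) h
    have h2 : ∑ k', W k (piv k') * K (piv k') t = -W k (np t) := by
      simp only [hKpiv, hWpivdelta]
      rw [Finset.sum_eq_single k]
      · simp
      · intro b _ hb; rw [if_neg (fun h => hb h.symm)]; ring
      · intro h; exact absurd (Finset.mem_univ k) h
    rw [h1, h2]; ring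
  refine ⟨np, K, hWK, hKnp, ?_⟩
  -- determinant reduction
  set M := jacH α β W piv κ x with hM
  have hMpiv : ∀ k l, M (piv k) l = W k l := by
    intro k l
    have hex : ∃ k', piv k' = piv k := ⟨k, rfl⟩
    rw [hM, jacH]
    simp only [dif_pos hex]
    rw [hpiv (Classical.choose_spec hex)]
  have hMnp : ∀ t l, M (np t) l = jacF α β κ x (np t) l := by
    intro t l
    rw [hM, jacH]
    simp only [dif_neg (hnp_npiv t)]
  set KE : Matrix (Fin s) (Fin r ⊕ Fin d) ℝ := Matrix.of fun i z =>
    Sum.elim (fun t => K i t) (fun k => if piv k = i then 1 else 0) z with hKE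
  have hKE'det : (KE.submatrix e id).det = 1 := by
    have : KE.submatrix (⇑e) id
        = Matrix.fromBlocks 1 0 (Matrix.of fun k t => K (piv k) t) 1 := by
      ext z w
      cases z with
      | inl t => cases w with
        | inl t' =>
          simp only [Matrix.submatrix_apply, id, he_inl, hKE, Matrix.of_apply, Sum.elim_inl,
            Matrix.fromBlocks_apply₁₁]
          rw [hKnp]
          simp [Matrix.one_apply, eq_comm]
        | inr k =>
          simp only [Matrix.submatrix_apply, id, he_inl, hKE, Matrix.of_apply, Sum.elim_inr,
            Matrix.fromBlocks_apply₁₂]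
          rw [if_neg (fun h => hnp_npiv t ⟨k, h⟩)]
          rfl
      | inr k => cases w with
        | inl t' =>
          simp only [Matrix.submatrix_apply, id, he_inr, hKE, Matrix.of_apply, Sum.elim_inl,
            Matrix.fromBlocks_apply₂₁]
        | inr k' =>
          simp only [Matrix.submatrix_apply, id, he_inr, hKE, Matrix.of_apply, Sum.elim_inr,
            Matrix.fromBlocks_apply₂₂]
          by_cases h : k' = k
          · rw [h, if_pos rfl, Matrix.one_apply_eq]
          · rw [if_neg (fun hh => h (hpiv hh)), Matrix.one_apply_ne (fun hh => h (by rw [hh]))]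
    rw [this, Matrix.det_fromBlocks_zero₁₂, Matrix.det_one, Matrix.det_one, mul_one]
  have hprod : (M.submatrix (⇑e) (⇑e)) * (KE.submatrix (⇑e) id) = (M * KE).submatrix (⇑e) id :=
    Matrix.submatrix_mul_equiv M KE _ e _
  have hMKE : (M * KE).submatrix (⇑e) id
      = Matrix.fromBlocks (Matrix.of fun t t' : Fin r => ∑ l, jacF α β κ x (np t) l * K l t')
          (Matrix.of fun t k => jacF α β κ x (np t) (piv k)) 0 1 := by
    ext z w
    cases z with
    | inl t => cases w with
      | inl t' =>
        simp only [Matrix.submatrix_apply, id, he_inl, Matrix.mul_apply,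
          Matrix.fromBlocks_apply₁₁, hKE, Matrix.of_apply, Sum.elim_inl]
        exact Finset.sum_congr rfl fun l _ => by rw [hMnp]
      | inr k =>
        simp only [Matrix.submatrix_apply, id, he_inl, Matrix.mul_apply,
          Matrix.fromBlocks_apply₁₂, hKE, Matrix.of_apply, Sum.elim_inr]
        rw [Finset.sum_eq_single (piv k)]
        · rw [if_pos rfl, mul_one, hMnp]
        · intro b _ hb; rw [if_neg (fun h => hb h.symm), mul_zero]
        · intro h; exact absurd (Finset.mem_univ _) h
    | inr k =>
      cases w with
      | inl t' =>
        simp only [Matrix.submatrix_apply, id, he_inr, Matrix.mul_apply,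
          Matrix.fromBlocks_apply₂₁, hKE, Matrix.of_apply, Sum.elim_inl, Matrix.zero_apply]
        rw [← hWK k t']
        exact Finset.sum_congr rfl fun l _ => by rw [hMpiv]
      | inr k' =>
        simp only [Matrix.submatrix_apply, id, he_inr, Matrix.mul_apply,
          Matrix.fromBlocks_apply₂₂, hKE, Matrix.of_apply, Sum.elim_inr]
        rw [Finset.sum_eq_single (piv k')]
        · rw [if_pos rfl, mul_one, hMpiv, hWpivdelta]
          simp [Matrix.one_apply]
        · intro b _ hb; rw [if_neg (fun h => hb h.symm), mul_zero]
        · intro h; exact absurd (Finset.mem_univ _) h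
  have : M.det = M.det * (KE.submatrix (⇑e) id).det := by rw [hKE'det, mul_one]
  rw [this, ← Matrix.det_submatrix_equiv_self e M, ← Matrix.det_mul, hprod, hMKE,
    Matrix.det_fromBlocks_zero₂₁, Matrix.det_one, mul_one]
  rfl

lemma factor {s m d r : ℕ} (α β : Matrix (Fin s) (Fin m) ℕ)
    (W : Matrix (Fin d) (Fin s) ℝ)
    (hWrank : W.rank = d) (hWN : W * stoich α β = 0) (hrd : d + r = s)
    (np : Fin r → Fin s) (K : Matrix (Fin s) (Fin r) ℝ)
    (hWK : ∀ k t, ∑ i, W k i * K i t = 0)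
    (hKnp : ∀ t t', K (np t) t' = if t' = t then 1 else 0) :
    ∀ i j, stoich α β i j = ∑ t, K i t * stoich α β (np t) j := by
  classical
  -- kernel of W has dimension r
  set f := W.mulVecLin with hf
  have hker : Module.finrank ℝ (LinearMap.ker f) = r := by
    have h1 := LinearMap.finrank_range_add_finrank_ker f
    have h2 : Module.finrank ℝ (LinearMap.range f) = d := hWrank
    simp only [Module.finrank_pi, Fintype.card_fin] at h1
    omega
  set φ : (LinearMap.ker f) →ₗ[ℝ] (Fin r → ℝ) :=
    (LinearMap.funLeft ℝ ℝ np).comp (LinearMap.ker f).subtype with hφ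
  have hKker : ∀ w : Fin r → ℝ, (fun i => ∑ t, w t * K i t) ∈ LinearMap.ker f := by
    intro w
    rw [LinearMap.mem_ker]
    funext k
    show ∑ i, W k i * ∑ t, w t * K i t = 0
    calc ∑ i, W k i * ∑ t, w t * K i t
        = ∑ i, ∑ t, w t * (W k i * K i t) := by
          refine Finset.sum_congr rfl fun i _ => ?_
          rw [Finset.mul_sum]
          exact Finset.sum_congr rfl fun t _ => by ring
      _ = ∑ t, ∑ i, w t * (W k i * K i t) := Finset.sum_comm
      _ = ∑ t, w t * ∑ i, W k i * K i t := by
          refine Finset.sum_congr rfl fun t _ => ?_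
          rw [Finset.mul_sum]
      _ = 0 := by simp [hWK]
  have hφsurj : Function.Surjective φ := by
    intro w
    refine ⟨⟨fun i => ∑ t, w t * K i t, hKker w⟩, ?_⟩
    funext t
    show ∑ t', w t' * K (np t) t' = w t
    simp only [hKnp]
    rw [Finset.sum_eq_single t]
    · simp
    · intro b _ hb; rw [if_neg hb, mul_zero]
    · intro h; exact absurd (Finset.mem_univ t) h
  have hφinj : Function.Injective φ := by
    rw [LinearMap.injective_iff_surjective_of_finrank_eq_finrank
      (by rw [hker, Module.finrank_pi, Fintype.card_fin])]
    exact hφsurj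
  intro i j
  set v : Fin s → ℝ := fun i => stoich α β i j - ∑ t, K i t * stoich α β (np t) j with hv
  have hv1 : v ∈ LinearMap.ker f := by
    rw [LinearMap.mem_ker]
    funext k
    show ∑ i, W k i * v i = 0
    have expand : ∀ i', W k i' * v i'
        = W k i' * stoich α β i' j - ∑ t, (W k i' * K i' t) * stoich α β (np t) j := by
      intro i'
      rw [hv]
      simp only []
      rw [mul_sub, Finset.mul_sum]
      congr 1
      exact Finset.sum_congr rfl fun t _ => by ring
    rw [Finset.sum_congr rfl fun i' _ => expand i', Finset.sum_sub_distrib]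
    have hA : ∑ i', W k i' * stoich α β i' j = 0 := by
      have := congrFun (congrFun hWN k) j
      rwa [Matrix.mul_apply] at this
    have hB : ∑ i', ∑ t, (W k i' * K i' t) * stoich α β (np t) j = 0 := by
      rw [Finset.sum_comm]
      have : ∀ t, ∑ i', (W k i' * K i' t) * stoich α β (np t) j = 0 := by
        intro t
        rw [← Finset.sum_mul, hWK, zero_mul]
      rw [Finset.sum_congr rfl fun t _ => this t, Finset.sum_const_zero]
    rw [hA, hB, sub_zero]
  have hv2 : φ ⟨v, hv1⟩ = 0 := by
    funext t
    show v (np t) = 0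
    rw [hv]
    simp only []
    have : ∑ t', K (np t) t' * stoich α β (np t') j = stoich α β (np t) j := by
      rw [Finset.sum_eq_single t]
      · rw [hKnp, if_pos rfl, one_mul]
      · intro b _ hb; rw [hKnp, if_neg hb, zero_mul]
      · intro h; exact absurd (Finset.mem_univ t) h
    rw [this, sub_self]
  have : (⟨v, hv1⟩ : LinearMap.ker f) = 0 := by
    apply hφinj
    rw [hv2, map_zero]
  have hv0 : v = 0 := congrArg Subtype.val this
  have := congrFun hv0 i
  rw [hv] at this
  simp only [Pi.zero_apply] at this
  linarith [this]

theorem key {s m r d : ℕ} (α β : Matrix (Fin s) (Fin m) ℕ)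
    (hα : ∀ i j, α i j ≤ 1) (hβ : ∀ i j, β i j ≤ 1)
    (hr12 : r = 1 ∨ r = 2) (hrd : d + r = s)
    (W : Matrix (Fin d) (Fin s) ℝ) (hWrank : W.rank = d) (hWN : W * stoich α β = 0)
    (piv : Fin d → Fin s) (hpiv : Function.Injective piv)
    (hlead : ∀ k, W k (piv k) = 1)
    (hred : ∀ k k', k' ≠ k → W k' (piv k) = 0)
    (κ : Fin m → ℝ) (hκ : ∀ j, 0 < κ j)
    (x : Fin s → ℝ) (hx : ∀ i, 0 < x i)
    (hss : ∀ i, rateFun α β κ x i = 0)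
    (hnd : (jacH α β W piv κ x).det ≠ 0) :
    Real.sign ((jacH α β W piv κ x).det) = (-1 : ℝ) ^ r := by
  classical
  obtain ⟨np, K, hWK, hKnp, hdet⟩ :=
    struct α β W piv hpiv hlead hred hrd κ x
  have hfac := factor α β W hWrank hWN hrd np K hWK hKnp
  -- positive coefficients
  set c : Fin m → ℝ := fun j => κ j * ∏ l', x l' ^ α l' j with hcdef
  have hc : ∀ j, 0 < c j := by
    intro j
    rw [hcdef]
    exact mul_pos (hκ j) (Finset.prod_pos fun l' _ => pow_pos (hx l') _)
  clear_value c
  have hjac : ∀ i l, jacF α β κ x i l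
      = (x l)⁻¹ * ∑ j, c j * (α l j : ℝ) * stoich α β i j := by
    intro i l
    rw [jacF_eq α β hα κ x hx i l]
    simp only [hcdef]
  -- basic 0/1 facts
  have hA01 : ∀ l j, ((α l j : ℝ) = 0 ∨ (α l j : ℝ) = 1) := by
    intro l j
    rcases Nat.le_one_iff_eq_zero_or_eq_one.mp (hα l j) with h | h <;> rw [h] <;> simp
  have hB01 : ∀ l j, ((β l j : ℝ) = 0 ∨ (β l j : ℝ) = 1) := by
    intro l j
    rcases Nat.le_one_iff_eq_zero_or_eq_one.mp (hβ l j) with h | h <;> rw [h] <;> simp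
  -- the C matrix and the a vector
  set C : Fin s → Fin s → ℝ :=
    fun l l' => ∑ j, c j * (α l j : ℝ) * stoich α β l' j with hCdef
  clear_value C
  set a : Fin s → ℝ :=
    fun l => ∑ j, c j * (α l j : ℝ) * (1 - (β l j : ℝ)) with hadef
  clear_value a
  have ha : ∀ l, 0 ≤ a l := by
    intro l
    rw [hadef]
    refine Finset.sum_nonneg fun j _ => ?_
    have h1 : (0:ℝ) ≤ (α l j : ℝ) := Nat.cast_nonneg _
    have h2 : (β l j : ℝ) ≤ 1 := by
      rcases hB01 l j with h | h <;> rw [h] <;> norm_num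
    exact mul_nonneg (mul_nonneg (hc j).le h1) (by linarith)
  have hCll : ∀ l, C l l = -(a l) := by
    intro l
    simp only [hCdef, hadef]
    rw [← Finset.sum_neg_distrib]
    refine Finset.sum_congr rfl fun j _ => ?_
    simp only [stoich]
    rcases hA01 l j with h | h <;> rw [h] <;> ring
  have hsteady : ∀ l, ∑ j, c j * stoich α β l j = 0 := by
    intro l
    have := hss l
    rw [rateFun] at this
    rw [← this]
    exact Finset.sum_congr rfl fun j _ => by rw [hcdef]; ring
  have hba : ∀ l, (∑ j, c j * (β l j : ℝ) * (1 - (α l j : ℝ))) = a l := by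
    intro l
    have : (∑ j, c j * (β l j : ℝ) * (1 - (α l j : ℝ))) - a l
        = ∑ j, c j * stoich α β l j := by
      simp only [hadef]
      rw [← Finset.sum_sub_distrib]
      refine Finset.sum_congr rfl fun j _ => ?_
      simp only [stoich]
      ring
    have h0 := hsteady l
    linarith [this, h0]
  have hub : ∀ l l', C l l' ≤ a l' := by
    intro l l'
    rw [← hba l']
    simp only [hCdef]
    refine Finset.sum_le_sum fun j _ => ?_
    simp only [stoich]
    rcases hA01 l j with h1 | h1 <;> rcases hA01 l' j with h2 | h2 <;>
      rcases hB01 l' j with h3 | h3 <;> rw [h1, h2, h3] <;> nlinarith [(hc j).le]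
  have hlb : ∀ l l', -(a l') ≤ C l l' := by
    intro l l'
    simp only [hadef, hCdef]
    rw [← Finset.sum_neg_distrib]
    refine Finset.sum_le_sum fun j _ => ?_
    simp only [stoich]
    rcases hA01 l j with h1 | h1 <;> rcases hA01 l' j with h2 | h2 <;>
      rcases hB01 l' j with h3 | h3 <;> rw [h1, h2, h3] <;> nlinarith [(hc j).le]
  have hCK : ∀ l l', C l l'
      = ∑ t, K l' t * ∑ j, c j * (α l j : ℝ) * stoich α β (np t) j := by
    intro l l'
    simp only [hCdef]
    calc (∑ j, c j * (α l j : ℝ) * stoich α β l' j)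
        = ∑ j, c j * (α l j : ℝ) * ∑ t, K l' t * stoich α β (np t) j := by
          exact Finset.sum_congr rfl fun j _ => by rw [← hfac l' j]
      _ = ∑ j, ∑ t, K l' t * (c j * (α l j : ℝ) * stoich α β (np t) j) := by
          refine Finset.sum_congr rfl fun j _ => ?_
          rw [Finset.mul_sum]
          exact Finset.sum_congr rfl fun t _ => by ring
      _ = ∑ t, ∑ j, K l' t * (c j * (α l j : ℝ) * stoich α β (np t) j) := Finset.sum_comm
      _ = ∑ t, K l' t * ∑ j, c j * (α l j : ℝ) * stoich α β (np t) j := by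
          refine Finset.sum_congr rfl fun t _ => ?_
          rw [Finset.mul_sum]
  rcases hr12 with hr | hr
  · -- rank 1
    subst hr
    have hdet1 : (jacH α β W piv κ x).det = ∑ l, (x l)⁻¹ * C l l := by
      rw [hdet]
      rw [Matrix.det_fin_one (fun t t' : Fin 1 => ∑ l, jacF α β κ x (np t) l * K l t')]
      beta_reduce
      refine Finset.sum_congr rfl fun l _ => ?_
      rw [hjac, hCK, Fin.sum_univ_one]
      ring
    have hle : (jacH α β W piv κ x).det ≤ 0 := by
      rw [hdet1]
      refine Finset.sum_nonpos fun l _ => ?_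
      rw [hCll]
      have := ha l
      have := (hx l)
      have : (0:ℝ) ≤ (x l)⁻¹ := by positivity
      nlinarith [ha l]
    have hlt : (jacH α β W piv κ x).det < 0 := lt_of_le_of_ne hle hnd
    rw [Real.sign_of_neg hlt]
    norm_num
  · -- rank 2
    subst hr
    set g : Fin 2 → Fin s → ℝ :=
      fun t l => ∑ j, c j * (α l j : ℝ) * stoich α β (np t) j with hgdef
    clear_value g
    have hjac2 : ∀ (t : Fin 2) l, jacF α β κ x (np t) l = (x l)⁻¹ * g t l := by
      intro t l
      rw [hjac]
      simp only [hgdef]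
    have hCK2 : ∀ l l', C l l' = K l' 0 * g 0 l + K l' 1 * g 1 l := by
      intro l l'
      rw [hCK, Fin.sum_univ_two]
      simp only [hgdef]
    set A0 : Fin s → ℝ := fun l => (x l)⁻¹ * g 0 l * K l 0 with hA0
    clear_value A0
    set A1 : Fin s → ℝ := fun l => (x l)⁻¹ * g 1 l * K l 1 with hA1
    clear_value A1
    set B0 : Fin s → ℝ := fun l => (x l)⁻¹ * g 0 l * K l 1 with hB0
    clear_value B0
    set B1 : Fin s → ℝ := fun l => (x l)⁻¹ * g 1 l * K l 0 with hB1
    clear_value B1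
    have hterm : ∀ l l', (x l)⁻¹ * (x l')⁻¹ * (C l l * C l' l' - C l l' * C l' l)
        = A0 l * A1 l' + A1 l * A0 l' - B0 l * B1 l' - B1 l * B0 l' := by
      intro l l'
      rw [hCK2, hCK2, hCK2, hCK2]
      simp only [hA0, hA1, hB0, hB1]
      ring
    have hM : Matrix.det (fun t t' : Fin 2 => ∑ l, jacF α β κ x (np t) l * K l t')
        = (∑ l, A0 l) * (∑ l, A1 l) - (∑ l, B0 l) * (∑ l, B1 l) := by
      have e00 : (∑ l, jacF α β κ x (np 0) l * K l 0) = ∑ l, A0 l :=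
        Finset.sum_congr rfl fun l _ => by rw [hjac2]; simp only [hA0]
      have e11 : (∑ l, jacF α β κ x (np 1) l * K l 1) = ∑ l, A1 l :=
        Finset.sum_congr rfl fun l _ => by rw [hjac2]; simp only [hA1]
      have e01 : (∑ l, jacF α β κ x (np 0) l * K l 1) = ∑ l, B0 l :=
        Finset.sum_congr rfl fun l _ => by rw [hjac2]; simp only [hB0]
      have e10 : (∑ l, jacF α β κ x (np 1) l * K l 0) = ∑ l, B1 l :=
        Finset.sum_congr rfl fun l _ => by rw [hjac2]; simp only [hB1]
      rw [Matrix.det_fin_two (fun t t' : Fin 2 => ∑ l, jacF α β κ x (np t) l * K l t')]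
      beta_reduce
      rw [e00, e11, e01, e10]
    have hiden : ∑ l, ∑ l', (x l)⁻¹ * (x l')⁻¹ * (C l l * C l' l' - C l l' * C l' l)
        = 2 * ((∑ l, A0 l) * (∑ l, A1 l) - (∑ l, B0 l) * (∑ l, B1 l)) := by
      calc ∑ l, ∑ l', (x l)⁻¹ * (x l')⁻¹ * (C l l * C l' l' - C l l' * C l' l)
          = ∑ l, ∑ l', (A0 l * A1 l' + A1 l * A0 l' - B0 l * B1 l' - B1 l * B0 l') :=
            Finset.sum_congr rfl fun l _ => Finset.sum_congr rfl fun l' _ => hterm l l'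
        _ = ∑ l, (A0 l * (∑ l', A1 l') + A1 l * (∑ l', A0 l')
              - B0 l * (∑ l', B1 l') - B1 l * (∑ l', B0 l')) := by
            refine Finset.sum_congr rfl fun l _ => ?_
            rw [Finset.sum_sub_distrib, Finset.sum_sub_distrib, Finset.sum_add_distrib,
              ← Finset.mul_sum, ← Finset.mul_sum, ← Finset.mul_sum, ← Finset.mul_sum]
        _ = 2 * ((∑ l, A0 l) * (∑ l, A1 l) - (∑ l, B0 l) * (∑ l, B1 l)) := by
            rw [Finset.sum_sub_distrib, Finset.sum_sub_distrib, Finset.sum_add_distrib,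
              ← Finset.sum_mul, ← Finset.sum_mul, ← Finset.sum_mul, ← Finset.sum_mul]
            ring
    have hE : ∀ l l', 0 ≤ C l l * C l' l' - C l l' * C l' l := by
      intro l l'
      rw [hCll, hCll]
      have h1 := hub l l'
      have h2 := hlb l l'
      have h3 := hub l' l
      have h4 := hlb l' l
      have h5 := ha l
      have h6 := ha l'
      nlinarith [mul_nonneg (by linarith : (0:ℝ) ≤ a l' - C l l') (by linarith : (0:ℝ) ≤ a l + C l' l),
        mul_nonneg (by linarith : (0:ℝ) ≤ a l' + C l l') (by linarith : (0:ℝ) ≤ a l - C l' l)]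
    have hge : 0 ≤ (jacH α β W piv κ x).det := by
      rw [hdet, hM]
      have : 0 ≤ ∑ l, ∑ l', (x l)⁻¹ * (x l')⁻¹ * (C l l * C l' l' - C l l' * C l' l) := by
        refine Finset.sum_nonneg fun l _ => Finset.sum_nonneg fun l' _ => ?_
        have hE' := hE l l'
        have hx1 : (0:ℝ) ≤ (x l)⁻¹ := inv_nonneg.mpr (hx l).le
        have hx2 : (0:ℝ) ≤ (x l')⁻¹ := inv_nonneg.mpr (hx l').le
        exact mul_nonneg (mul_nonneg hx1 hx2) hE'
      rw [hiden] at this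
      linarith
    have hgt : 0 < (jacH α β W piv κ x).det := lt_of_le_of_ne hge (Ne.symm hnd)
    rw [Real.sign_of_pos hgt]
    norm_num

/-- For a zero-one network of rank `r ∈ {1,2}`, at every positive steady state where
`det Jac_h ≠ 0`, the sign of `det Jac_h` is `(−1)^r`. -/
theorem stmt6 {s m : ℕ} (α β : Matrix (Fin s) (Fin m) ℕ)
    (hnet : ∀ j, ∃ i, α i j ≠ β i j)
    (h01 : ∀ i j, α i j ≤ 1 ∧ β i j ≤ 1)
    (hrank : (stoich α β).rank = 1 ∨ (stoich α β).rank = 2)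
    (W : Matrix (Fin (s - (stoich α β).rank)) (Fin s) ℝ)
    (hWrank : W.rank = s - (stoich α β).rank)
    (hWN : W * stoich α β = 0)
    (piv : Fin (s - (stoich α β).rank) → Fin s)
    (hpiv : StrictMono piv)
    (hlead : ∀ k, W k (piv k) = 1)
    (hech : ∀ (k) (l : Fin s), (l : ℕ) < (piv k : ℕ) → W k l = 0)
    (hred : ∀ k k', k' ≠ k → W k' (piv k) = 0)
    (κ : Fin m → ℝ) (hκ : ∀ j, 0 < κ j)
    (x : Fin s → ℝ) (hx : ∀ i, 0 < x i)
    (hss : ∀ i, rateFun α β κ x i = 0)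
    (hnd : (jacH α β W piv κ x).det ≠ 0) :
    Real.sign ((jacH α β W piv κ x).det) = (-1 : ℝ) ^ (stoich α β).rank := by
  have hrs : (stoich α β).rank ≤ s := by
    have := Matrix.rank_le_card_height (stoich α β)
    simpa using this
  exact key α β (fun i j => (h01 i j).1) (fun i j => (h01 i j).2) hrank
    (by omega) W hWrank hWN piv hpiv.injective hlead hred κ hκ x hx hss hnd
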